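/- If a separably 𝓑𝓛-injective Banach lattice Z contains a closed sublattice lattice isomorphic to c₀, then the density character of Z is at least the cardinality of the continuum 𝔠. -/

import Mathlib

open Filter ZeroAtInftyContinuousMap
open scoped ZeroAtInfty

noncomputable section

/-- Pointwise supremum on `c₀ = C₀(ℕ, ℝ)`. -/
instance : Max C₀(ℕ, ℝ) :=
  ⟨fun f g =>
    { toContinuousMap := (f : C(ℕ, ℝ)) ⊔ (g : C(ℕ, ℝ)),
      zero_at_infty' := by
        have h := (zero_at_infty f).max (zero_at_infty g)
        rw [max_self] at h
        exact h }⟩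

/-- Pointwise infimum on `c₀ = C₀(ℕ, ℝ)`. -/
instance : Min C₀(ℕ, ℝ) :=
  ⟨fun f g =>
    { toContinuousMap := (f : C(ℕ, ℝ)) ⊓ (g : C(ℕ, ℝ)),
      zero_at_infty' := by
        have h := (zero_at_infty f).min (zero_at_infty g)
        rw [min_self] at h
        exact h }⟩

/-- `c₀ = C₀(ℕ, ℝ)` is a lattice (with the pointwise operations). -/
instance : Lattice C₀(ℕ, ℝ) :=
  let _ : LE C₀(ℕ, ℝ) := ⟨fun f g => (f : ℕ → ℝ) ≤ g⟩
  let _ : LT C₀(ℕ, ℝ) := ⟨fun f g => (f : ℕ → ℝ) < g⟩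
  DFunLike.coe_injective.lattice _ Iff.rfl Iff.rfl
    (fun _ _ => rfl) (fun _ _ => rfl)

/-- A Banach lattice `Z` is separably `𝓑𝓛`-injective if for every separable
Banach lattice `Y`, every closed sublattice `X ⊆ Y` (given by a lattice
isometric embedding) and every lattice homomorphism `T : X → Z`, there is a
lattice homomorphism extension `T' : Y → Z`. -/
def SeparablyBLInjective (Z : Type)
    [NormedAddCommGroup Z] [Lattice Z] [HasSolidNorm Z] [IsOrderedAddMonoid Z] [NormedSpace ℝ Z] [CompleteSpace Z] : Prop :=
  ∀ (X Y : Type)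
    (_ : NormedAddCommGroup X) (_ : Lattice X) (_ : HasSolidNorm X)
    (_ : IsOrderedAddMonoid X) (_ : NormedSpace ℝ X) (_ : CompleteSpace X)
    (_ : NormedAddCommGroup Y) (_ : Lattice Y) (_ : HasSolidNorm Y)
    (_ : IsOrderedAddMonoid Y) (_ : NormedSpace ℝ Y) (_ : CompleteSpace Y)
    (_ : TopologicalSpace.SeparableSpace Y)
    (j : X →ₗᵢ[ℝ] Y) (T : X →L[ℝ] Z),
    (∀ a b : X, j (a ⊔ b) = j a ⊔ j b) → (∀ a b : X, T (a ⊔ b) = T a ⊔ T b) →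
    ∃ T' : Y →L[ℝ] Z, (∀ a b : Y, T' (a ⊔ b) = T' a ⊔ T' b) ∧ ∀ x, T' (j x) = T x

namespace SepInj

abbrev W := BoundedContinuousFunction ℕ ℝ

/-- indicator of evens in `ℓ∞` -/
def uu : W :=
  BoundedContinuousFunction.ofNormedAddCommGroup
    (fun n => if Even n then (1:ℝ) else 0) continuous_of_discreteTopology 1
    (by intro n; split <;> simp)

lemma uu_apply (n : ℕ) : uu n = if Even n then (1:ℝ) else 0 := rfl

lemma uu_even {n : ℕ} (h : Even n) : uu n = 1 := by simp [uu_apply, h]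
lemma uu_odd {n : ℕ} (h : ¬ Even n) : uu n = 0 := by simp [uu_apply, h]

lemma uu_nonneg (n : ℕ) : 0 ≤ uu n := by rw [uu_apply]; split <;> norm_num
lemma uu_le_one (n : ℕ) : uu n ≤ 1 := by rw [uu_apply]; split <;> norm_num

lemma norm_uu_le : ‖uu‖ ≤ 1 := by
  refine (BoundedContinuousFunction.norm_le one_pos.le).2 fun n => ?_
  rw [Real.norm_eq_abs, abs_le]
  exact ⟨by linarith [uu_nonneg n], uu_le_one n⟩

/-- build an element of `c₀` from a function tending to `0` along `cofinite` -/
def mkC0 (f : ℕ → ℝ) (hf : Tendsto f cofinite (nhds 0)) : C₀(ℕ, ℝ) :=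
  ⟨⟨f, continuous_of_discreteTopology⟩, by rwa [cocompact_eq_cofinite]⟩

lemma mkC0_apply (f : ℕ → ℝ) (hf) (n : ℕ) : mkC0 f hf n = f n := rfl

lemma tendsto_cofinite_of_C0 (f : C₀(ℕ, ℝ)) : Tendsto ⇑f cofinite (nhds 0) := by
  have := zero_at_infty f
  rwa [cocompact_eq_cofinite] at this

/-- the sublattice of `ℓ∞` generated by `c₀` and `uu`, as a submodule -/
def Ysub : Submodule ℝ W where
  carrier := {g | ∃ t : ℝ, Tendsto (fun n => g n - t * uu n) cofinite (nhds 0)}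
  add_mem' := by
    rintro g h ⟨s, hs⟩ ⟨t, ht⟩
    refine ⟨s + t, ?_⟩
    have := hs.add ht
    rw [add_zero] at this
    convert this using 2 with n
    simp [BoundedContinuousFunction.add_apply]; ring
  zero_mem' := by
    refine ⟨0, ?_⟩
    simpa using tendsto_const_nhds
  smul_mem' := by
    rintro c g ⟨t, ht⟩
    refine ⟨c * t, ?_⟩
    have := ht.const_mul c
    rw [mul_zero] at this
    convert this using 2 with n
    simp [BoundedContinuousFunction.smul_apply]; ring

lemma evens_infinite : {n : ℕ | Even n}.Infinite :=
  Set.infinite_of_injective_forall_mem (f := fun k : ℕ => 2 * k)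
    (fun a b h => by simpa using h) (fun k => ⟨k, by ring⟩)

/-- the key norm estimate: the coefficient of `uu` is bounded by the norm -/
lemma abs_coeff_le {g : W} {t : ℝ}
    (h : Tendsto (fun n => g n - t * uu n) cofinite (nhds 0)) : |t| ≤ ‖g‖ := by
  refine le_of_forall_pos_le_add fun ε hε => ?_
  have h' : ∀ᶠ n in cofinite, |g n - t * uu n| < ε := by
    have := Metric.tendsto_nhds.1 h ε hε
    simpa [Real.dist_eq] using this
  rw [Filter.eventually_cofinite] at h'
  obtain ⟨n, hn⟩ := (evens_infinite.diff h').nonempty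
  have h1 : uu n = 1 := uu_even hn.1
  have h2 : |g n - t * uu n| < ε := not_not.1 hn.2
  have h3 : |g n| ≤ ‖g‖ := by
    have := BoundedContinuousFunction.norm_coe_le_norm g n
    simpa [Real.norm_eq_abs] using this
  rw [h1, mul_one] at h2
  have h5 : |t| ≤ |g n| + |t - g n| := by
    calc |t| = |g n + (t - g n)| := by ring_nf
      _ ≤ |g n| + |t - g n| := abs_add_le _ _
  have h6 : |t - g n| < ε := by rwa [abs_sub_comm]
  linarith

/-- the parametrization of `Ysub` by `c₀ × ℝ` -/
def psi (p : C₀(ℕ, ℝ) × ℝ) : W := p.1.toBCF + p.2 • uu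

lemma psi_apply (p : C₀(ℕ, ℝ) × ℝ) (n : ℕ) : psi p n = p.1 n + p.2 * uu n := rfl

lemma psi_sub (p q : C₀(ℕ, ℝ) × ℝ) : psi p - psi q = psi (p - q) := by
  ext n
  simp [psi_apply, BoundedContinuousFunction.sub_apply]
  ring

lemma norm_psi_le (p : C₀(ℕ, ℝ) × ℝ) : ‖psi p‖ ≤ ‖p.1‖ + ‖p.2‖ := by
  calc ‖psi p‖ ≤ ‖p.1.toBCF‖ + ‖p.2 • uu‖ := norm_add_le _ _
    _ ≤ ‖p.1‖ + ‖p.2‖ := by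
        rw [norm_toBCF_eq_norm]
        have hs : ‖p.2 • uu‖ = ‖p.2‖ * ‖uu‖ := by exact norm_smul p.2 uu
        have : ‖p.2‖ * ‖uu‖ ≤ ‖p.2‖ * 1 :=
          mul_le_mul_of_nonneg_left norm_uu_le (norm_nonneg _)
        linarith

lemma psi_tendsto (p : C₀(ℕ, ℝ) × ℝ) :
    Tendsto (fun n => psi p n - p.2 * uu n) cofinite (nhds 0) := by
  have := tendsto_cofinite_of_C0 p.1
  convert this using 2 with n
  simp [psi_apply]

lemma range_psi : Set.range psi = (Ysub : Set W) := by
  ext g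
  constructor
  · rintro ⟨p, rfl⟩
    exact ⟨p.2, psi_tendsto p⟩
  · rintro ⟨t, ht⟩
    refine ⟨(mkC0 (fun n => g n - t * uu n) ht, t), ?_⟩
    ext n
    simp [psi_apply, mkC0_apply]

lemma norm_le_of_psi (p : C₀(ℕ, ℝ) × ℝ) : ‖p.1‖ ≤ 2 * ‖psi p‖ ∧ ‖p.2‖ ≤ ‖psi p‖ := by
  have ht : |p.2| ≤ ‖psi p‖ := abs_coeff_le (psi_tendsto p)
  refine ⟨?_, by rwa [Real.norm_eq_abs]⟩
  have : p.1.toBCF = psi p - p.2 • uu := by ext n; simp [psi_apply]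
  calc ‖p.1‖ = ‖p.1.toBCF‖ := (norm_toBCF_eq_norm).symm
    _ = ‖psi p - p.2 • uu‖ := by rw [this]
    _ ≤ ‖psi p‖ + ‖p.2 • uu‖ := norm_sub_le _ _
    _ ≤ ‖psi p‖ + |p.2| := by
        have hs : ‖p.2 • uu‖ = ‖p.2‖ * ‖uu‖ := by exact norm_smul p.2 uu
        rw [Real.norm_eq_abs] at hs
        nlinarith [norm_uu_le, abs_nonneg p.2, norm_nonneg uu]
    _ ≤ 2 * ‖psi p‖ := by linarith

lemma psi_lipschitz : LipschitzWith 2 psi := by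
  refine LipschitzWith.of_dist_le_mul fun p q => ?_
  rw [dist_eq_norm, psi_sub, Prod.dist_eq]
  have h := norm_psi_le (p - q)
  have h1 : ‖(p - q).1‖ = dist p.1 q.1 := by rw [dist_eq_norm]; rfl
  have h2 : ‖(p - q).2‖ = dist p.2 q.2 := by rw [dist_eq_norm]; rfl
  rw [h1, h2] at h
  have := le_max_left (dist p.1 q.1) (dist p.2 q.2)
  have := le_max_right (dist p.1 q.1) (dist p.2 q.2)
  push_cast
  linarith

lemma psi_antilipschitz : AntilipschitzWith 2 psi := by
  refine AntilipschitzWith.of_le_mul_dist fun p q => ?_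
  have hd : dist (psi p) (psi q) = ‖psi (p - q)‖ := by
    rw [dist_eq_norm, psi_sub]
  rw [hd, Prod.dist_eq]
  obtain ⟨h1, h2⟩ := norm_le_of_psi (p - q)
  have e1 : ‖(p - q).1‖ = dist p.1 q.1 := by rw [dist_eq_norm]; rfl
  have e2 : ‖(p - q).2‖ = dist p.2 q.2 := by rw [dist_eq_norm]; rfl
  rw [e1] at h1; rw [e2] at h2
  rw [max_le_iff]
  push_cast
  constructor
  · linarith
  · nlinarith [norm_nonneg (psi (p - q))]

lemma isClosed_Ysub : IsClosed (Ysub : Set W) := by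
  rw [← range_psi]
  exact psi_antilipschitz.isClosed_range psi_lipschitz.uniformContinuous

instance : CompleteSpace ↥Ysub := isClosed_Ysub.completeSpace_coe

/-- single point indicator in `ℓ∞` -/
def dd (m : ℕ) : W :=
  BoundedContinuousFunction.ofNormedAddCommGroup
    (fun n => if n = m then (1:ℝ) else 0) continuous_of_discreteTopology 1
    (by intro n; split <;> simp)

lemma dd_apply (m n : ℕ) : dd m n = if n = m then (1:ℝ) else 0 := rfl

lemma Ysub_subset_closure_span :
    (Ysub : Set W) ⊆ closure (Submodule.span ℝ (Set.range dd ∪ {uu}) : Set W) := by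
  rw [← range_psi]
  rintro g ⟨p, rfl⟩
  rw [Metric.mem_closure_iff]
  intro ε hε
  have h' : {n | ¬ |p.1 n| < ε/2}.Finite := by
    have := Metric.tendsto_nhds.1 (tendsto_cofinite_of_C0 p.1) (ε/2) (by linarith)
    rw [Filter.eventually_cofinite] at this
    simpa [Real.dist_eq] using this
  set F := h'.toFinset with hF
  refine ⟨(∑ n ∈ F, p.1 n • dd n) + p.2 • uu, ?_, ?_⟩
  · refine Submodule.add_mem _ (Submodule.sum_mem _ fun n _ => Submodule.smul_mem _ _ ?_)
      (Submodule.smul_mem _ _ ?_)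
    · exact Submodule.subset_span (Or.inl ⟨n, rfl⟩)
    · exact Submodule.subset_span (Or.inr rfl)
  · rw [dist_eq_norm]
    have key : ∀ m, ‖(psi p - ((∑ n ∈ F, p.1 n • dd n) + p.2 • uu)) m‖ ≤ ε/2 := by
      intro m
      have hsum : (∑ n ∈ F, p.1 n • dd n) m = ∑ n ∈ F, p.1 n * dd n m := by
        simp
      have hsum2 : (∑ n ∈ F, p.1 n * dd n m) = if m ∈ F then p.1 m else 0 := by
        simp only [dd_apply, mul_ite, mul_one, mul_zero]
        exact Finset.sum_ite_eq F m (fun n => p.1 n)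
      have happ : (psi p - ((∑ n ∈ F, p.1 n • dd n) + p.2 • uu)) m
          = p.1 m - (if m ∈ F then p.1 m else 0) := by
        simp [psi_apply, BoundedContinuousFunction.sub_apply,
          BoundedContinuousFunction.add_apply, hsum, hsum2]
        try ring
      rw [happ, Real.norm_eq_abs]
      by_cases hm : m ∈ F
      · simp [hm]; linarith
      · have : |p.1 m| < ε/2 := by
          have := hm
          rw [hF, Set.Finite.mem_toFinset] at this
          simpa using not_not.1 (fun hc => this hc)
        simp [hm]
        linarith
    calc ‖psi p - ((∑ n ∈ F, p.1 n • dd n) + p.2 • uu)‖ ≤ ε/2 :=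
          (BoundedContinuousFunction.norm_le (by linarith)).2 key
      _ < ε := by linarith

lemma isSeparable_Ysub : TopologicalSpace.IsSeparable (Ysub : Set W) := by
  have hc : (Set.range dd ∪ {uu}).Countable :=
    (Set.countable_range dd).union (Set.countable_singleton uu)
  exact ((hc.isSeparable.span).closure).mono Ysub_subset_closure_span

instance : TopologicalSpace.SeparableSpace ↥Ysub :=
  isSeparable_Ysub.separableSpace

lemma coe_sup_apply (g h : W) (n : ℕ) : (g ⊔ h) n = g n ⊔ h n := rfl
lemma coe_inf_apply (g h : W) (n : ℕ) : (g ⊓ h) n = g n ⊓ h n := rfl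

lemma sup_mul_uu (s t : ℝ) (n : ℕ) : (s ⊔ t) * uu n = (s * uu n) ⊔ (t * uu n) := by
  by_cases h : Even n
  · rw [uu_even h]; simp
  · rw [uu_odd h]; simp

lemma inf_mul_uu (s t : ℝ) (n : ℕ) : (s ⊓ t) * uu n = (s * uu n) ⊓ (t * uu n) := by
  by_cases h : Even n
  · rw [uu_even h]; simp
  · rw [uu_odd h]; simp

lemma sup_mem_Ysub {g h : W} (hg : g ∈ Ysub) (hh : h ∈ Ysub) : g ⊔ h ∈ Ysub := by
  obtain ⟨s, hs⟩ := hg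
  obtain ⟨t, ht⟩ := hh
  refine ⟨s ⊔ t, ?_⟩
  have hb : Tendsto (fun n => |g n - s * uu n| + |h n - t * uu n|) cofinite (nhds 0) := by
    have := (hs.abs).add (ht.abs)
    simpa using this
  refine squeeze_zero_norm (fun n => ?_) hb
  rw [Real.norm_eq_abs, coe_sup_apply, sup_mul_uu]
  calc |g n ⊔ h n - (s * uu n ⊔ t * uu n)| ≤ |g n - s * uu n| ⊔ |h n - t * uu n| :=
        abs_max_sub_max_le_max _ _ _ _
    _ ≤ |g n - s * uu n| + |h n - t * uu n| :=
        sup_le (le_add_of_nonneg_right (abs_nonneg _)) (le_add_of_nonneg_left (abs_nonneg _))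

lemma inf_mem_Ysub {g h : W} (hg : g ∈ Ysub) (hh : h ∈ Ysub) : g ⊓ h ∈ Ysub := by
  obtain ⟨s, hs⟩ := hg
  obtain ⟨t, ht⟩ := hh
  refine ⟨s ⊓ t, ?_⟩
  have hb : Tendsto (fun n => |g n - s * uu n| + |h n - t * uu n|) cofinite (nhds 0) := by
    have := (hs.abs).add (ht.abs)
    simpa using this
  refine squeeze_zero_norm (fun n => ?_) hb
  rw [Real.norm_eq_abs, coe_inf_apply, inf_mul_uu]
  calc |g n ⊓ h n - (s * uu n ⊓ t * uu n)| ≤ |g n - s * uu n| ⊔ |h n - t * uu n| :=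
        abs_min_sub_min_le_max _ _ _ _
    _ ≤ |g n - s * uu n| + |h n - t * uu n| :=
        sup_le (le_add_of_nonneg_right (abs_nonneg _)) (le_add_of_nonneg_left (abs_nonneg _))

instance : Max ↥Ysub := ⟨fun a b => ⟨(a : W) ⊔ (b : W), sup_mem_Ysub a.2 b.2⟩⟩
instance : Min ↥Ysub := ⟨fun a b => ⟨(a : W) ⊓ (b : W), inf_mem_Ysub a.2 b.2⟩⟩

lemma Ysub_coe_sup (a b : ↥Ysub) : ((a ⊔ b : ↥Ysub) : W) = (a : W) ⊔ (b : W) := rfl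
lemma Ysub_coe_inf (a b : ↥Ysub) : ((a ⊓ b : ↥Ysub) : W) = (a : W) ⊓ (b : W) := rfl

instance YsubLattice : Lattice ↥Ysub :=
  Subtype.coe_injective.lattice _ Iff.rfl Iff.rfl (fun _ _ => rfl) (fun _ _ => rfl)

instance : HasSolidNorm ↥Ysub := by
  refine ⟨fun a b h => ?_⟩
  show ‖(a : W)‖ ≤ ‖(b : W)‖
  exact HasSolidNorm.solid (α := W) (show |(a : W)| ≤ |(b : W)| from h)

instance YsubNLACG : IsOrderedAddMonoid ↥Ysub :=
  { add_le_add_left := by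
      intro a b h c
      show ((a + c : ↥Ysub) : W) ≤ ((b + c : ↥Ysub) : W)
      exact add_le_add (show (a : W) ≤ (b : W) from h) le_rfl }

instance : HasSolidNorm C₀(ℕ, ℝ) := by
  refine ⟨fun f g h => ?_⟩
  rw [← norm_toBCF_eq_norm, ← norm_toBCF_eq_norm (f := g)]
  refine (BoundedContinuousFunction.norm_le (norm_nonneg _)).2 fun n => ?_
  have hn : |f n| ≤ |g n| := (show ⇑|f| ≤ ⇑|g| from h) n
  calc ‖f.toBCF n‖ = |f n| := rfl
    _ ≤ |g n| := hn
    _ ≤ ‖g.toBCF‖ := by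
        have := BoundedContinuousFunction.norm_coe_le_norm g.toBCF n
        simpa [Real.norm_eq_abs] using this

instance XNLACG : IsOrderedAddMonoid C₀(ℕ, ℝ) :=
  { add_le_add_left := by
      intro f g h c
      show ⇑(f + c) ≤ ⇑(g + c)
      intro n
      exact add_le_add (show f n ≤ g n from (show ⇑f ≤ ⇑g from h) n) le_rfl }

open scoped Classical in
/-- for any infinite, co-infinite `A ⊆ ℕ` there is a permutation of `ℕ`
carrying the evens exactly onto `A` -/
lemma exists_equiv_even (A : Set ℕ) (hA : A.Infinite) (hAc : Aᶜ.Infinite) :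
    ∃ e : ℕ ≃ ℕ, ∀ n, e n ∈ A ↔ Even n := by
  haveI i1 : Infinite ↥{n : ℕ | Even n} := evens_infinite.to_subtype
  haveI i2 : Infinite ↥{n : ℕ | ¬ Even n} := by
    refine Set.Infinite.to_subtype ?_
    exact Set.infinite_of_injective_forall_mem (f := fun k : ℕ => 2 * k + 1)
      (fun a b h => by simpa using h) (fun k => by simp [Nat.even_add_one, Nat.even_mul])
  haveI i3 : Infinite ↥A := hA.to_subtype
  haveI i4 : Infinite ↥(Aᶜ) := hAc.to_subtype
  letI d1 := Nat.Subtype.denumerable {n : ℕ | Even n}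
  letI d2 := Nat.Subtype.denumerable {n : ℕ | ¬ Even n}
  letI d3 := Nat.Subtype.denumerable A
  letI d4 := Nat.Subtype.denumerable (Aᶜ)
  let eE : ↥{n : ℕ | Even n} ≃ ℕ := Denumerable.eqv _
  let eEc : ↥{n : ℕ | ¬ Even n} ≃ ℕ := Denumerable.eqv _
  let eA : ↥A ≃ ℕ := Denumerable.eqv _
  let eAc : ↥(Aᶜ) ≃ ℕ := Denumerable.eqv _
  let q1 : {n : ℕ // Even n} ⊕ {n : ℕ // ¬ Even n} ≃ ℕ := Equiv.sumCompl _
  let q2 : {n : ℕ // n ∈ A} ⊕ {n : ℕ // ¬ n ∈ A} ≃ ℕ := Equiv.sumCompl _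
  let m1 : {n : ℕ // Even n} ≃ {n : ℕ // n ∈ A} := eE.trans eA.symm
  let m2 : {n : ℕ // ¬ Even n} ≃ {n : ℕ // ¬ n ∈ A} :=
    eEc.trans ((eAc.symm).trans (Equiv.subtypeEquivRight fun n => by
      simp [Set.mem_compl_iff]))
  refine ⟨q1.symm.trans ((Equiv.sumCongr m1 m2).trans q2), fun n => ?_⟩
  by_cases h : Even n
  · have h1 : q1.symm n = Sum.inl ⟨n, h⟩ := Equiv.sumCompl_symm_apply_of_pos h
    rw [Equiv.trans_apply, Equiv.trans_apply, h1, Equiv.sumCongr_apply, Sum.map_inl]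
    have h2 : q2 (Sum.inl (m1 ⟨n, h⟩)) = ↑(m1 ⟨n, h⟩) := Equiv.sumCompl_apply_inl _
    rw [h2]
    exact iff_of_true (m1 ⟨n, h⟩).2 h
  · have h1 : q1.symm n = Sum.inr ⟨n, h⟩ := Equiv.sumCompl_symm_apply_of_neg h
    rw [Equiv.trans_apply, Equiv.trans_apply, h1, Equiv.sumCongr_apply, Sum.map_inr]
    have h2 : q2 (Sum.inr (m2 ⟨n, h⟩)) = ↑(m2 ⟨n, h⟩) := Equiv.sumCompl_apply_inr _
    rw [h2]
    exact iff_of_false (m2 ⟨n, h⟩).2 h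

/-- the family of infinite co-infinite subsets of `ℕ`, indexed by `Set ℕ` -/
def Afam (S : Set ℕ) : Set ℕ := {n | ¬ Even n ∨ ∃ m ∈ S, n = 4 * m}

lemma Afam_infinite (S : Set ℕ) : (Afam S).Infinite :=
  Set.infinite_of_injective_forall_mem (f := fun k : ℕ => 2 * k + 1)
    (fun a b h => by simpa using h)
    (fun k => Or.inl (by simp [Nat.even_add_one, Nat.even_mul]))

lemma Afam_compl_infinite (S : Set ℕ) : (Afam S)ᶜ.Infinite :=
  Set.infinite_of_injective_forall_mem (f := fun k : ℕ => 4 * k + 2)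
    (fun a b h => by simpa using h)
    (fun k => by
      simp only [Set.mem_compl_iff, Afam, Set.mem_setOf_eq, not_or]
      constructor
      · simp only [not_not]
        exact ⟨2 * k + 1, by ring⟩
      · rintro ⟨m, _, hm⟩
        omega)

lemma four_mul_mem_Afam {S : Set ℕ} {m : ℕ} : 4 * m ∈ Afam S ↔ m ∈ S := by
  simp only [Afam, Set.mem_setOf_eq]
  constructor
  · rintro (h | ⟨m', hm', he⟩)
    · exact absurd ⟨2 * m, by ring⟩ h
    · have : m' = m := by omega
      rwa [← this]
  · intro h
    exact Or.inr ⟨m, h, rfl⟩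

/-- single point indicator in `c₀` -/
def eC (m : ℕ) : C₀(ℕ, ℝ) :=
  mkC0 (fun n => if n = m then 1 else 0) (by
    have he : (fun _ : ℕ => (0:ℝ)) =ᶠ[cofinite] (fun n => if n = m then (1:ℝ) else 0) := by
      rw [Filter.eventuallyEq_iff_exists_mem]
      refine ⟨{m}ᶜ, ?_, fun n hn => by simp only []; rw [if_neg (by simpa using hn)]⟩
      rw [Filter.mem_cofinite, compl_compl]
      exact Set.finite_singleton m
    exact Tendsto.congr' he tendsto_const_nhds)

lemma eC_apply (m n : ℕ) : eC m n = if n = m then 1 else 0 := rfl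

lemma eC_nonneg (m n : ℕ) : 0 ≤ eC m n := by rw [eC_apply]; split <;> norm_num
lemma eC_le_one (m n : ℕ) : eC m n ≤ 1 := by rw [eC_apply]; split <;> norm_num

lemma norm_eC (m : ℕ) : ‖eC m‖ = 1 := by
  rw [← norm_toBCF_eq_norm]
  refine le_antisymm ((BoundedContinuousFunction.norm_le one_pos.le).2 fun n => ?_) ?_
  · rw [Real.norm_eq_abs, abs_le]
    have hrfl : (eC m).toBCF n = eC m n := rfl
    constructor
    · linarith [eC_nonneg m n]
    · linarith [eC_le_one m n]
  · have := BoundedContinuousFunction.norm_coe_le_norm (eC m).toBCF m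
    simpa [eC_apply] using this

lemma eC_sup_zero (m : ℕ) : eC m ⊔ 0 = eC m := by
  apply DFunLike.coe_injective
  funext n
  exact sup_eq_left.2 (eC_nonneg m n)

lemma uu_mem : uu ∈ Ysub := ⟨1, by simpa using tendsto_const_nhds⟩

/-- the element `1_E` of `Y` -/
def yY : ↥Ysub := ⟨uu, uu_mem⟩

/-- the sublattice embedding `c₀ → Y` induced by a permutation of `ℕ` -/
def jmap (e : ℕ ≃ ℕ) : C₀(ℕ, ℝ) →ₗᵢ[ℝ] ↥Ysub where
  toLinearMap :=
    { toFun := fun f => ⟨f.toBCF.compContinuous ⟨⇑e, continuous_of_discreteTopology⟩,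
        ⟨0, by simpa [Function.comp_def] using (tendsto_cofinite_of_C0 f).comp e.injective.tendsto_cofinite⟩⟩
      map_add' := by
        intro f g
        apply Subtype.ext
        apply BoundedContinuousFunction.ext
        intro n
        rfl
      map_smul' := by
        intro r f
        apply Subtype.ext
        apply BoundedContinuousFunction.ext
        intro n
        rfl }
  norm_map' := by
    intro f
    show ‖f.toBCF.compContinuous ⟨⇑e, continuous_of_discreteTopology⟩‖ = ‖f‖
    refine le_antisymm ?_ ?_
    · rw [← norm_toBCF_eq_norm]
      exact BoundedContinuousFunction.norm_compContinuous_le _ _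
    · rw [← norm_toBCF_eq_norm]
      refine (BoundedContinuousFunction.norm_le (norm_nonneg _)).2 fun n => ?_
      have : f.toBCF n = (f.toBCF.compContinuous
          ⟨⇑e, continuous_of_discreteTopology⟩) (e.symm n) := by
        simp [BoundedContinuousFunction.compContinuous_apply]
      rw [this]
      exact BoundedContinuousFunction.norm_coe_le_norm _ _

lemma jmap_coe_apply (e : ℕ ≃ ℕ) (f : C₀(ℕ, ℝ)) (n : ℕ) :
    ((jmap e f : ↥Ysub) : W) n = f (e n) := rfl

lemma jmap_sup (e : ℕ ≃ ℕ) (a b : C₀(ℕ, ℝ)) :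
    jmap e (a ⊔ b) = jmap e a ⊔ jmap e b := by
  apply Subtype.ext
  apply BoundedContinuousFunction.ext
  intro n
  rfl

lemma jmap_eC_sup_yY {e : ℕ ≃ ℕ} {A : Set ℕ} (hP : ∀ n, e n ∈ A ↔ Even n)
    {m : ℕ} (hm : m ∈ A) : jmap e (eC m) ⊔ yY = yY := by
  apply Subtype.ext
  apply BoundedContinuousFunction.ext
  intro k
  show eC m (e k) ⊔ uu k = uu k
  refine sup_eq_right.2 ?_
  by_cases hk : Even k
  · rw [uu_even hk]; exact eC_le_one m _
  · rw [uu_odd hk]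
    have hne : e k ≠ m := fun hek => hk ((hP k).1 (hek ▸ hm))
    rw [eC_apply, if_neg hne]

lemma jmap_eC_inf_yY {e : ℕ ≃ ℕ} {A : Set ℕ} (hP : ∀ n, e n ∈ A ↔ Even n)
    {m : ℕ} (hm : m ∉ A) : jmap e (eC m) ⊓ yY = 0 := by
  apply Subtype.ext
  apply BoundedContinuousFunction.ext
  intro k
  show eC m (e k) ⊓ uu k = (0 : W) k
  have h0 : (0 : W) k = 0 := rfl
  rw [h0]
  by_cases hk : Even k
  · have hne : e k ≠ m := fun hek => hm (hek ▸ (hP k).2 hk)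
    rw [eC_apply, if_neg hne, uu_even hk]
    simp
  · rw [uu_odd hk]
    exact inf_eq_right.2 (eC_nonneg m _)

end SepInj

/-- If a separably `𝓑𝓛`-injective Banach lattice `Z` contains a closed
sublattice lattice isomorphic to `c₀` (i.e. there is a lattice homomorphism
from `c₀ = C₀(ℕ, ℝ)` into `Z` which is an isomorphism onto its range), then
the density character of `Z` is at least the continuum: every dense subset of
`Z` has cardinality at least `𝔠`. -/
theorem sep_injective_with_c0_nonseparable (Z : Type)
    [NormedAddCommGroup Z] [Lattice Z] [HasSolidNorm Z] [IsOrderedAddMonoid Z] [NormedSpace ℝ Z] [CompleteSpace Z]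
    (hZ : SeparablyBLInjective Z)
    (T : C₀(ℕ, ℝ) →L[ℝ] Z)
    (hTlat : ∀ f g : C₀(ℕ, ℝ), T (f ⊔ g) = T f ⊔ T g)
    (hTbelow : ∃ c : ℝ, 0 < c ∧ ∀ f : C₀(ℕ, ℝ), c * ‖f‖ ≤ ‖T f‖) :
    ∀ D : Set Z, Dense D → Cardinal.continuum ≤ Cardinal.mk D := by
  intro D hD
  classical
  obtain ⟨c, hc, hTb⟩ := hTbelow
  have hEx : ∀ S : Set ℕ, ∃ e : ℕ ≃ ℕ, ∀ n, e n ∈ SepInj.Afam S ↔ Even n := fun S =>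
    SepInj.exists_equiv_even _ (SepInj.Afam_infinite S) (SepInj.Afam_compl_infinite S)
  choose es hes using hEx
  have hext : ∀ S : Set ℕ, ∃ T' : ↥SepInj.Ysub →L[ℝ] Z,
      (∀ a b : ↥SepInj.Ysub, T' (a ⊔ b) = T' a ⊔ T' b) ∧
      ∀ x, T' (SepInj.jmap (es S) x) = T x := by
    intro S
    obtain ⟨T', h1, h2⟩ := hZ C₀(ℕ, ℝ) ↥SepInj.Ysub inferInstance inferInstance inferInstance SepInj.XNLACG
      inferInstance inferInstance
      inferInstance SepInj.YsubLattice inferInstance SepInj.YsubNLACG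
      inferInstance inferInstance inferInstance
      (SepInj.jmap (es S)) T (fun a b => SepInj.jmap_sup (es S) a b) hTlat
    exact ⟨T', h1, h2⟩
  choose Ts hTs1 hTs2 using hext
  set z : Set ℕ → Z := fun S => Ts S SepInj.yY with hzdef
  have key : ∀ S S' : Set ℕ, ∀ m : ℕ,
      m ∈ SepInj.Afam S → m ∉ SepInj.Afam S' → c ≤ ‖z S - z S'‖ := by
    intro S S' m hm hm'
    set v := T (SepInj.eC m) with hv
    have hv1 : v ⊔ z S = z S := by
      have h := congrArg (Ts S) (SepInj.jmap_eC_sup_yY (hes S) hm)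
      rw [hTs1 S, hTs2 S] at h
      exact h
    have hvle : v ≤ z S := sup_eq_right.1 hv1
    have hinfpres : ∀ a b : ↥SepInj.Ysub, Ts S' (a ⊓ b) = Ts S' a ⊓ Ts S' b := by
      intro a b
      have h1 : a ⊓ b = a + b - a ⊔ b := eq_sub_of_add_eq (inf_add_sup a b)
      rw [h1, map_sub (Ts S'), map_add (Ts S'), hTs1]
      exact (eq_sub_of_add_eq (inf_add_sup (Ts S' a) (Ts S' b))).symm
    have hv2 : v ⊓ z S' = 0 := by
      have h := congrArg (Ts S') (SepInj.jmap_eC_inf_yY (hes S') hm')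
      rw [hinfpres, hTs2 S'] at h
      simpa using h
    have hv0 : (0 : Z) ≤ v := by
      have h := congrArg T (SepInj.eC_sup_zero m)
      rw [hTlat, map_zero] at h
      exact sup_eq_left.1 h
    have h3 : v ⊔ z S' = v + z S' := by
      rw [← inf_add_sup v (z S'), hv2, zero_add]
    have h4 : v = v ⊔ z S' - z S' := by rw [h3]; abel
    have h5 : v ≤ z S ⊔ z S' - z S' := by
      rw [h4]
      exact sub_le_sub_right (sup_le_sup_right hvle _) _
    have h6 : z S ⊔ z S' - z S' = (z S - z S') ⊔ 0 := by rw [sup_sub]; simp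
    have h7 : v ≤ (z S - z S') ⊔ 0 := h6 ▸ h5
    have habs1 : ‖v‖ ≤ ‖(z S - z S') ⊔ 0‖ := by
      refine HasSolidNorm.solid ?_
      rw [abs_of_nonneg hv0, abs_of_nonneg (le_sup_right : (0:Z) ≤ _)]
      exact h7
    have habs2 : ‖(z S - z S') ⊔ 0‖ ≤ ‖z S - z S'‖ := by
      refine HasSolidNorm.solid ?_
      rw [abs_of_nonneg (le_sup_right : (0:Z) ≤ _)]
      exact sup_le (le_abs_self _) (abs_nonneg _)
    have hnorm : c ≤ ‖v‖ := by
      have h := hTb (SepInj.eC m)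
      rw [SepInj.norm_eC, mul_one] at h
      exact h
    linarith
  have hsep : ∀ S S' : Set ℕ, S ≠ S' → c ≤ ‖z S - z S'‖ := by
    intro S S' hne
    have : ∃ m, ¬ (m ∈ S ↔ m ∈ S') := by
      by_contra h
      push_neg at h
      exact hne (Set.ext h)
    obtain ⟨m, hm⟩ := this
    by_cases hS : m ∈ S
    · have hS' : m ∉ S' := fun h => hm ⟨fun _ => h, fun _ => hS⟩
      exact key S S' (4 * m) (SepInj.four_mul_mem_Afam.2 hS)
        (fun h => hS' (SepInj.four_mul_mem_Afam.1 h))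
    · have hS' : m ∈ S' := by
        by_contra h
        exact hm ⟨fun h' => absurd h' hS, fun h' => absurd h' h⟩
      have := key S' S (4 * m) (SepInj.four_mul_mem_Afam.2 hS')
        (fun h => hS (SepInj.four_mul_mem_Afam.1 h))
      rwa [norm_sub_rev] at this
  have hDex : ∀ S : Set ℕ, ∃ d ∈ D, dist (z S) d < c / 2 := by
    intro S
    rcases Metric.dense_iff.1 hD (z S) (c / 2) (by linarith) with ⟨d, hd1, hd2⟩
    refine ⟨d, hd2, ?_⟩
    have := Metric.mem_ball.1 hd1
    rwa [dist_comm] at this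
  choose d hd1 hd2 using hDex
  have hinj : Function.Injective fun S : Set ℕ => (⟨d S, hd1 S⟩ : D) := by
    intro S S' h
    by_contra hne
    have h1 := hsep S S' hne
    have hdd : d S = d S' := congrArg Subtype.val h
    have h2 : dist (z S) (z S') < c := by
      calc dist (z S) (z S') ≤ dist (z S) (d S) + dist (d S) (z S') := dist_triangle _ _ _
        _ < c / 2 + c / 2 := by
            refine add_lt_add (hd2 S) ?_
            rw [hdd, dist_comm]
            exact hd2 S'
        _ = c := by ring
    rw [dist_eq_norm] at h2
    linarith
  calc Cardinal.continuum = Cardinal.mk (Set ℕ) := by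
        rw [Cardinal.mk_set, Cardinal.mk_nat, Cardinal.two_power_aleph0]
    _ ≤ Cardinal.mk D := Cardinal.mk_le_of_injective hinj

end
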